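/- There exists an n-vertex graph G with maximum degree Δ = ℓ, where ℓ = 0.5·√(log₂ n) (assumed to be a positive integer with (ℓ+1) | n), such that if each vertex v independently samples a uniformly random ℓ-subset L(v) of a fixed palette of 2ℓ colors, then with probability 1 − o(1) (as n → ∞) there is no proper coloring of G assigning each vertex a color from its sampled list. Concretely, G may be taken as a disjoint union of n/(ℓ+1) cliques each on ℓ+1 vertices; for each clique the probability that all its vertices sample exactly the same ℓ-subset {1,…,ℓ} is at least n^{−1/2}, and since there are ω(n^{1/2}) independent cliques, with probability 1−o(1) some clique has ∪_{v∈C} L(v) = {1,…,ℓ}, and that clique of ℓ+1 vertices cannot be properly list-colored from only ℓ colors. -/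

import Mathlib

lemma aux_choose_le_two_pow (ℓ : ℕ) : (2*ℓ).choose ℓ ≤ 2 ^ (2*ℓ) := by
  calc (2*ℓ).choose ℓ ≤ ∑ i ∈ Finset.range (2*ℓ+1), (2*ℓ).choose i :=
        Finset.single_le_sum (fun i _ => Nat.zero_le _) (by simp [Finset.mem_range]; omega)
    _ = 2 ^ (2*ℓ) := Nat.sum_range_choose _

lemma aux_analytic (n m ℓ : ℕ) (δ : ℝ) (hℓ2 : 2 ≤ ℓ) (hn2 : n = 2 ^ (4*ℓ^2))
    (hm : n = (ℓ+1) * m) (hexp : Real.exp (-(ℓ:ℝ)) ≤ δ) :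
    (((((2*ℓ).choose ℓ)^(ℓ+1) - 1)^m : ℕ) : ℝ) ≤ δ * (((2*ℓ).choose ℓ : ℕ) : ℝ)^n := by
  set K := (2*ℓ).choose ℓ with hKdef
  have hK1 : 1 ≤ K := Nat.choose_pos (by omega)
  have hQ1 : 1 ≤ K^(ℓ+1) := Nat.one_le_pow _ _ (by omega)
  have hQn : K^(ℓ+1) * (ℓ+1) * ℓ ≤ n := by
    calc K^(ℓ+1) * (ℓ+1) * ℓ ≤ (2^(2*ℓ))^(ℓ+1) * 2^ℓ * 2^ℓ := by
          gcongr
          · exact aux_choose_le_two_pow ℓ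
          · exact (Nat.lt_two_pow_self (n := ℓ))
          · exact (Nat.lt_two_pow_self (n := ℓ)).le
      _ = 2^(2*ℓ*(ℓ+1) + ℓ + ℓ) := by rw [← pow_mul, ← pow_add, ← pow_add]
      _ ≤ 2^(4*ℓ^2) := Nat.pow_le_pow_right (by norm_num) (by nlinarith)
      _ = n := hn2.symm
  set QR : ℝ := (K:ℝ)^(ℓ+1) with hQRdef
  have hQR1 : (1:ℝ) ≤ QR := one_le_pow₀ (by exact_mod_cast hK1)
  have hQRpos : (0:ℝ) < QR := by linarith
  have hcast : (((K^(ℓ+1) - 1)^m : ℕ) : ℝ) = (QR - 1)^m := by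
    push_cast [Nat.cast_sub hQ1]
    ring
  rw [hcast]
  have hstep : QR - 1 ≤ QR * Real.exp (-(1/QR)) := by
    have h1 : 1 - 1/QR ≤ Real.exp (-(1/QR)) := by
      have := Real.add_one_le_exp (-(1/QR)); linarith
    have h2 : QR * (1 - 1/QR) = QR - 1 := by field_simp
    nlinarith [mul_le_mul_of_nonneg_left h1 hQRpos.le]
  have hmono : (QR - 1)^m ≤ (QR * Real.exp (-(1/QR)))^m :=
    pow_le_pow_left₀ (by linarith) hstep m
  have heq : (QR * Real.exp (-(1/QR)))^m = (K:ℝ)^n * Real.exp (-((m:ℝ)/QR)) := by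
    rw [mul_pow, hQRdef, ← pow_mul, ← Real.exp_nat_mul, ← hm]
    ring_nf
  have hfrac : (ℓ:ℝ) ≤ (m:ℝ)/QR := by
    rw [le_div_iff₀ hQRpos]
    have hnat : K^(ℓ+1) * ℓ ≤ m := by
      have := hQn
      rw [hm] at this
      have h3 : (ℓ+1) * (K^(ℓ+1) * ℓ) ≤ (ℓ+1) * m := by
        calc (ℓ+1) * (K^(ℓ+1) * ℓ) = K^(ℓ+1) * (ℓ+1) * ℓ := by ring
          _ ≤ (ℓ+1) * m := this
      exact Nat.le_of_mul_le_mul_left h3 (by omega)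
    calc (ℓ:ℝ) * QR = ((K^(ℓ+1) * ℓ : ℕ) : ℝ) := by push_cast; ring
      _ ≤ (m:ℝ) := by exact_mod_cast hnat
  have hexp2 : Real.exp (-((m:ℝ)/QR)) ≤ δ := by
    calc Real.exp (-((m:ℝ)/QR)) ≤ Real.exp (-(ℓ:ℝ)) := by
          apply Real.exp_le_exp.mpr; linarith
      _ ≤ δ := hexp
  calc (QR - 1)^m ≤ (K:ℝ)^n * Real.exp (-((m:ℝ)/QR)) := by rw [← heq]; exact hmono
    _ ≤ (K:ℝ)^n * δ := mul_le_mul_of_nonneg_left hexp2 (by positivity)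
    _ = δ * (K:ℝ)^n := by ring

/-- Lower bound for palette sparsification with 2Δ colors. For every
δ > 0 and all large enough `n` (with `ℓ = 0.5·√(log₂ n)` a positive integer and
`(ℓ+1) ∣ n`), there is an `n`-vertex graph `G` of maximum degree `ℓ` such that the
fraction of choices of ℓ-element lists `L(v) ⊆ {1,…,2ℓ}` admitting a proper
list-coloring of `G` is at most δ. -/
theorem stmt_5 : ∀ δ : ℝ, 0 < δ → ∃ N : ℕ, ∀ n : ℕ, N ≤ n →
    ∀ ℓ : ℕ, 0 < ℓ → (ℓ : ℝ) = 0.5 * Real.sqrt (Real.logb 2 n) → (ℓ + 1) ∣ n →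
    ∃ G : SimpleGraph (Fin n),
      (∀ v, (G.neighborSet v).ncard ≤ ℓ) ∧
      (∃ v, (G.neighborSet v).ncard = ℓ) ∧
      (Nat.card {L : Fin n → Finset (Fin (2 * ℓ)) //
          (∀ v, (L v).card = ℓ) ∧
          ∃ c : Fin n → Fin (2 * ℓ), (∀ v, c v ∈ L v) ∧
            ∀ u v, G.Adj u v → c u ≠ c v} : ℝ)
        ≤ δ * (Nat.card {L : Fin n → Finset (Fin (2 * ℓ)) //
            ∀ v, (L v).card = ℓ} : ℝ) := by
  intro δ hδ
  set k : ℕ := max 2 ⌈|Real.log δ|⌉₊ with hkdef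
  refine ⟨2 ^ (4 * k^2), ?_⟩
  intro n hn ℓ hℓ hℓeq hdvd
  have hexpk : Real.exp (-(k:ℝ)) ≤ δ := by
    have h1 : -Real.log δ ≤ (k:ℝ) := by
      calc -Real.log δ ≤ |Real.log δ| := neg_le_abs _
        _ ≤ (⌈|Real.log δ|⌉₊ : ℝ) := Nat.le_ceil _
        _ ≤ (k:ℝ) := by exact_mod_cast Nat.le_max_right _ _
    calc Real.exp (-(k:ℝ)) ≤ Real.exp (Real.log δ) := Real.exp_le_exp.mpr (by linarith)
      _ = δ := Real.exp_log hδ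
  have hn1 : 1 ≤ n := le_trans Nat.one_le_two_pow hn
  -- derive n = 2^(4ℓ²)
  have hn2 : n = 2 ^ (4 * ℓ^2) := by
    have hlogb : Real.logb 2 n = 4 * (ℓ:ℝ)^2 := by
      have hnn : 0 ≤ Real.logb 2 n := Real.logb_nonneg (by norm_num) (by exact_mod_cast hn1)
      have hs : Real.sqrt (Real.logb 2 n) = 2 * ℓ := by rw [hℓeq]; ring
      have := Real.sq_sqrt hnn
      rw [hs] at this
      nlinarith [this]
    have hcast : (n:ℝ) = ((2 ^ (4*ℓ^2) : ℕ) : ℝ) := by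
      have h0 : (0:ℝ) < n := by exact_mod_cast hn1
      have := Real.rpow_logb (by norm_num : (0:ℝ) < 2) (by norm_num) h0
      rw [hlogb] at this
      rw [← this]
      push_cast
      rw [show ((4:ℝ) * (ℓ:ℝ)^2) = ((4*ℓ^2 : ℕ) : ℝ) by push_cast; ring, Real.rpow_natCast]
    exact_mod_cast hcast
  have hkℓ : k ≤ ℓ := by
    rw [hn2] at hn
    have h4 : 4 * k^2 ≤ 4 * ℓ^2 := (Nat.pow_le_pow_iff_right (by norm_num)).mp hn
    have hk2 : k^2 ≤ ℓ^2 := by omega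
    exact (Nat.pow_le_pow_iff_left (by norm_num : (2:ℕ) ≠ 0)).mp hk2
  have hℓ2 : 2 ≤ ℓ := le_trans (Nat.le_max_left _ _) hkℓ
  have hnpos : 0 < n := hn1
  obtain ⟨m, hm⟩ := hdvd
  -- the graph: disjoint cliques via an equivalence Fin n ≃ Fin m × Fin (ℓ+1)
  let e : Fin n ≃ Fin m × Fin (ℓ+1) :=
    (finProdFinEquiv.trans (finCongr (by rw [hm, Nat.mul_comm]))).symm
  set G : SimpleGraph (Fin n) := SimpleGraph.fromRel (fun u v => (e u).1 = (e v).1) with hG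
  have hdeg : ∀ v, (G.neighborSet v).ncard = ℓ := by
    intro v
    have hset : G.neighborSet v = {u | u ≠ v ∧ (e u).1 = (e v).1} := by
      ext u
      simp only [SimpleGraph.mem_neighborSet, G, SimpleGraph.fromRel_adj, Set.mem_setOf_eq]
      constructor
      · rintro ⟨h1, h2 | h2⟩
        exacts [⟨Ne.symm h1, h2.symm⟩, ⟨Ne.symm h1, h2⟩]
      · rintro ⟨h1, h2⟩
        exact ⟨Ne.symm h1, Or.inr h2⟩
    rw [hset, ← Nat.card_coe_set_eq]
    have hequiv : {u : Fin n | u ≠ v ∧ (e u).1 = (e v).1} ≃ {i : Fin (ℓ+1) // i ≠ (e v).2} := by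
      refine ⟨fun u => ⟨(e u.1).2, ?_⟩, fun i => ⟨e.symm ((e v).1, i.1), ?_, ?_⟩, ?_, ?_⟩
      · intro hcon
        exact u.2.1 (e.injective (Prod.ext u.2.2 hcon))
      · intro hcon
        have h2 : e v = ((e v).1, i.1) := by conv_lhs => rw [← hcon, Equiv.apply_symm_apply]
        exact i.2 (congrArg Prod.snd h2).symm
      · simp
      · rintro ⟨u, hu1, hu2⟩
        apply Subtype.ext
        simp only
        rw [← hu2]
        simp
      · rintro ⟨i, hi⟩
        apply Subtype.ext
        simp
    rw [Nat.card_congr hequiv, Nat.card_eq_fintype_card, Fintype.card_subtype_compl,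
      Fintype.card_subtype_eq, Fintype.card_fin]
    omega
  refine ⟨G, fun v => (hdeg v).le, ⟨⟨0, hnpos⟩, hdeg _⟩, ?_⟩
  -- a fixed ℓ-subset of the palette
  obtain ⟨S₀, -, hS₀⟩ := Finset.exists_subset_card_eq
    (s := (Finset.univ : Finset (Fin (2*ℓ)))) (n := ℓ) (by simp; omega)
  have hcardT : Nat.card {t : Fin (ℓ+1) → {S : Finset (Fin (2*ℓ)) // S.card = ℓ} //
      t ≠ fun _ => (⟨S₀, hS₀⟩ : {S : Finset (Fin (2*ℓ)) // S.card = ℓ})}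
      = ((2*ℓ).choose ℓ)^(ℓ+1) - 1 := by
    rw [Nat.card_eq_fintype_card]
    rw [Fintype.card_subtype_compl, Fintype.card_subtype_eq, Fintype.card_fun,
      Fintype.card_finset_len, Fintype.card_fin, Fintype.card_fin]
  -- upper bound on the number of colorable lists
  have hupper : Nat.card {L : Fin n → Finset (Fin (2 * ℓ)) //
          (∀ v, (L v).card = ℓ) ∧
          ∃ c : Fin n → Fin (2 * ℓ), (∀ v, c v ∈ L v) ∧
            ∀ u v, G.Adj u v → c u ≠ c v} ≤ (((2*ℓ).choose ℓ)^(ℓ+1) - 1)^m := by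
    have hinj : Nat.card {L : Fin n → Finset (Fin (2 * ℓ)) //
          (∀ v, (L v).card = ℓ) ∧
          ∃ c : Fin n → Fin (2 * ℓ), (∀ v, c v ∈ L v) ∧
            ∀ u v, G.Adj u v → c u ≠ c v} ≤ Nat.card (Fin m →
              {t : Fin (ℓ+1) → {S : Finset (Fin (2*ℓ)) // S.card = ℓ} //
                t ≠ fun _ => (⟨S₀, hS₀⟩ : {S : Finset (Fin (2*ℓ)) // S.card = ℓ})}) := by
      apply Nat.card_le_card_of_injective
        (f := fun L b => (⟨fun i => ⟨L.1 (e.symm (b,i)), L.2.1 _⟩, by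
          intro hcon
          obtain ⟨c, hc1, hc2⟩ := L.2.2
          have hall : ∀ i : Fin (ℓ+1), L.1 (e.symm (b,i)) = S₀ :=
            fun i => congrArg Subtype.val (congrFun hcon i)
          have hginj : Function.Injective
              (fun i : Fin (ℓ+1) => (⟨c (e.symm (b,i)), by
                rw [← hall i]; exact hc1 _⟩ : {x // x ∈ S₀})) := by
            intro i j hij
            by_contra hne
            have huv : e.symm (b,i) ≠ e.symm (b,j) := by
              intro h
              exact hne (by simpa using congrArg (fun z => (e z).2) h)
            have hadj : G.Adj (e.symm (b,i)) (e.symm (b,j)) := by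
              rw [hG]
              simp only [SimpleGraph.fromRel_adj, Equiv.apply_symm_apply]
              refine ⟨huv, ?_⟩
              simp
            exact hc2 _ _ hadj (congrArg Subtype.val hij)
          have hle := Fintype.card_le_of_injective _ hginj
          rw [Fintype.card_fin, Fintype.card_coe, hS₀] at hle
          omega⟩))
      intro L₁ L₂ h
      apply Subtype.ext; funext v
      have h1 := congrArg Subtype.val (congrFun h (e v).1)
      have h2 := congrArg Subtype.val (congrFun h1 (e v).2)
      simpa using h2
    rw [Nat.card_fun, Nat.card_eq_fintype_card (α := Fin m), Fintype.card_fin, hcardT] at hinj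
    exact hinj
  -- lower bound on the total number of lists
  have hlower : ((2*ℓ).choose ℓ)^n ≤ Nat.card {L : Fin n → Finset (Fin (2 * ℓ)) //
            ∀ v, (L v).card = ℓ} := by
    have hinj : Nat.card (Fin n → {S : Finset (Fin (2*ℓ)) // S.card = ℓ}) ≤
        Nat.card {L : Fin n → Finset (Fin (2 * ℓ)) // ∀ v, (L v).card = ℓ} := by
      apply Nat.card_le_card_of_injective (f := fun L => ⟨fun v => (L v).1, fun v => (L v).2⟩)
      intro a b h
      funext v
      exact Subtype.ext (congrFun (congrArg Subtype.val h) v)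
    rw [Nat.card_fun, Nat.card_eq_fintype_card (α := Fin n), Fintype.card_fin,
      Nat.card_eq_fintype_card, Fintype.card_finset_len, Fintype.card_fin] at hinj
    exact hinj
  -- combine
  have hexpℓ : Real.exp (-(ℓ:ℝ)) ≤ δ := by
    calc Real.exp (-(ℓ:ℝ)) ≤ Real.exp (-(k:ℝ)) := by
          apply Real.exp_le_exp.mpr
          simp only [neg_le_neg_iff]
          exact_mod_cast hkℓ
      _ ≤ δ := hexpk
  calc (Nat.card {L : Fin n → Finset (Fin (2 * ℓ)) //
          (∀ v, (L v).card = ℓ) ∧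
          ∃ c : Fin n → Fin (2 * ℓ), (∀ v, c v ∈ L v) ∧
            ∀ u v, G.Adj u v → c u ≠ c v} : ℝ)
      ≤ (((((2*ℓ).choose ℓ)^(ℓ+1) - 1)^m : ℕ) : ℝ) := by exact_mod_cast hupper
    _ ≤ δ * (((2*ℓ).choose ℓ : ℕ) : ℝ)^n := aux_analytic n m ℓ δ hℓ2 hn2 hm hexpℓ
    _ ≤ δ * (Nat.card {L : Fin n → Finset (Fin (2 * ℓ)) // ∀ v, (L v).card = ℓ} : ℝ) := by
        apply mul_le_mul_of_nonneg_left _ hδ.le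
        exact_mod_cast hlower
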